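/- Existence for the learning problem with linear state equation (Proposition 6.1): Assume (L1) and (L2). Then the learning problem (LP_lin) has a solution: there exist α* ∈ [α̲,ᾱ] and (y*,u*) with Ay* = Bu* minimizing J_{α*,y_δ} over {(y,u) ∈ Y × U : Ay = Bu}, such that ‖u* − u†‖²_Ũ ≤ ‖u_α − u†‖²_Ũ for every α ∈ [α̲,ᾱ] and every minimizer (y_α,u_α) of J_{α,y_δ} over {(y,u) : Ay = Bu}. -/

import Mathlib

open Filter Topology
open scoped RealInnerProductSpace

/-- The Tikhonov functional of the lower level problem of `(LP_lin)`, with penalties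
`Ψᵢ(u) = ½‖Kᵢu‖²`. -/
noncomputable def Jlin {Y U Ytil : Type*} [NormedAddCommGroup Y] [NormedSpace ℝ Y]
    [NormedAddCommGroup U] [NormedSpace ℝ U]
    [NormedAddCommGroup Ytil] [InnerProductSpace ℝ Ytil]
    {m r : ℕ} {E : Fin r → Type*} [∀ i, NormedAddCommGroup (E i)]
    [∀ i, InnerProductSpace ℝ (E i)]
    (ιY : Y →L[ℝ] Ytil) (K : (i : Fin r) → U →L[ℝ] E i)
    (α : Fin r → ℝ) (yδ : Fin m → Ytil) (p : Y × U) : ℝ :=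
  (1 / (2 * (m : ℝ))) * ∑ j, ‖ιY p.1 - yδ j‖ ^ 2 + ∑ i, (α i / 2) * ‖K i p.2‖ ^ 2

/-- `p = (y,u)` solves the lower level problem of `(LP_lin)` with the linear state
equation `Ay = Bu`. -/
def SolvesLin {Y U Ytil Z : Type*} [NormedAddCommGroup Y] [NormedSpace ℝ Y]
    [NormedAddCommGroup U] [NormedSpace ℝ U]
    [NormedAddCommGroup Ytil] [InnerProductSpace ℝ Ytil]
    [NormedAddCommGroup Z] [NormedSpace ℝ Z]
    {m r : ℕ} {E : Fin r → Type*} [∀ i, NormedAddCommGroup (E i)]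
    [∀ i, InnerProductSpace ℝ (E i)]
    (A : Y →L[ℝ] Z) (B : U →L[ℝ] Z)
    (ιY : Y →L[ℝ] Ytil) (K : (i : Fin r) → U →L[ℝ] E i)
    (α : Fin r → ℝ) (yδ : Fin m → Ytil) (p : Y × U) : Prop :=
  A p.1 = B p.2 ∧ ∀ q : Y × U, A q.1 = B q.2 → Jlin ιY K α yδ p ≤ Jlin ιY K α yδ q

set_option synthInstance.maxHeartbeats 1000000
set_option maxHeartbeats 1000000

section Aux

variable {U Ytil : Type*}
  [NormedAddCommGroup U] [NormedSpace ℝ U]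
  [NormedAddCommGroup Ytil] [InnerProductSpace ℝ Ytil]
  {m r : ℕ} {E : Fin r → Type*} [∀ i, NormedAddCommGroup (E i)]
  [∀ i, InnerProductSpace ℝ (E i)]

/-- The symmetric bilinear form associated to the reduced Tikhonov functional. -/
noncomputable def aForm (G : U →L[ℝ] Ytil) (K : (i : Fin r) → U →L[ℝ] E i)
    (α : Fin r → ℝ) (u v : U) : ℝ :=
  ⟪G u, G v⟫ + ∑ i, α i * ⟪K i u, K i v⟫

/-- The linear part of the reduced Tikhonov functional. -/
noncomputable def ellF (G : U →L[ℝ] Ytil) (yδ : Fin m → Ytil) (u : U) : ℝ :=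
  (m : ℝ)⁻¹ * ∑ j, ⟪yδ j, G u⟫

/-- The reduced Tikhonov functional. -/
noncomputable def Flin (G : U →L[ℝ] Ytil) (K : (i : Fin r) → U →L[ℝ] E i)
    (α : Fin r → ℝ) (yδ : Fin m → Ytil) (u : U) : ℝ :=
  (1 / (2 * (m : ℝ))) * ∑ j, ‖G u - yδ j‖ ^ 2 + ∑ i, (α i / 2) * ‖K i u‖ ^ 2

variable (G : U →L[ℝ] Ytil) (K : (i : Fin r) → U →L[ℝ] E i)
  (α : Fin r → ℝ) (yδ : Fin m → Ytil)

lemma aForm_comm (u v : U) : aForm G K α u v = aForm G K α v u := by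
  simp [aForm, real_inner_comm]

lemma aForm_sub_left (u w v : U) :
    aForm G K α (u - w) v = aForm G K α u v - aForm G K α w v := by
  simp [aForm, map_sub, inner_sub_left, mul_sub, Finset.sum_sub_distrib]
  ring

lemma aForm_self_eq (u : U) :
    aForm G K α u u = ‖G u‖ ^ 2 + ∑ i, α i * ‖K i u‖ ^ 2 := by
  simp [aForm, real_inner_self_eq_norm_sq]

lemma aForm_self_nonneg (hα : ∀ i, 0 ≤ α i) (u : U) : 0 ≤ aForm G K α u u := by
  rw [aForm_self_eq]
  have : (0:ℝ) ≤ ∑ i, α i * ‖K i u‖ ^ 2 :=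
    Finset.sum_nonneg fun i _ => mul_nonneg (hα i) (by positivity)
  positivity

lemma Flin_eq (hm : 0 < m) (u : U) :
    Flin G K α yδ u =
      aForm G K α u u / 2 - ellF G yδ u + (1 / (2 * (m : ℝ))) * ∑ j, ‖yδ j‖ ^ 2 := by
  have hm' : (m : ℝ) ≠ 0 := Nat.cast_ne_zero.mpr hm.ne'
  have h1 : ∑ j, ‖G u - yδ j‖ ^ 2
      = (m : ℝ) * ‖G u‖ ^ 2 - 2 * ∑ j, ⟪yδ j, G u⟫ + ∑ j, ‖yδ j‖ ^ 2 := by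
    simp [norm_sub_sq_real, Finset.sum_add_distrib, Finset.sum_sub_distrib, Finset.mul_sum,
      real_inner_comm (G u)]
  have h2 : ∑ i, (α i / 2) * ‖K i u‖ ^ 2 = (∑ i, α i * ⟪K i u, K i u⟫) / 2 := by
    rw [Finset.sum_div]
    exact Finset.sum_congr rfl fun i _ => by rw [real_inner_self_eq_norm_sq]; ring
  rw [Flin, h1, h2, aForm, ellF, real_inner_self_eq_norm_sq]
  field_simp
  ring

/-- Any solution of the normal equations is the unique minimiser of `Flin`,
up to the quadratic expansion identity. -/
lemma Flin_expansion (hm : 0 < m) {u₀ : U}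
    (hNE : ∀ v, aForm G K α u₀ v = ellF G yδ v) (u : U) :
    Flin G K α yδ u = Flin G K α yδ u₀ + aForm G K α (u - u₀) (u - u₀) / 2 := by
  have hd : aForm G K α (u - u₀) (u - u₀)
      = aForm G K α u u - 2 * aForm G K α u₀ u + aForm G K α u₀ u₀ := by
    rw [aForm_sub_left, aForm_comm G K α u (u - u₀), aForm_comm G K α u₀ (u - u₀),
      aForm_sub_left, aForm_sub_left, aForm_comm G K α u₀ u]
    ring
  have e1 := Flin_eq G K α yδ hm u
  have e2 := Flin_eq G K α yδ hm u₀
  have h1 := hNE u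
  have h2 := hNE u₀
  have hℓ : ellF G yδ u - ellF G yδ u₀ = aForm G K α u₀ u - aForm G K α u₀ u₀ := by
    rw [h1, h2]
  rw [e1, e2, hd]
  linarith [hℓ]

instance instPiLpComplete {r : ℕ} {E : Fin r → Type*} [∀ i, NormedAddCommGroup (E i)]
    [∀ i, CompleteSpace (E i)] : CompleteSpace (PiLp 2 E) :=
  inferInstance

/-- Existence of a solution to the normal equations, via orthogonal projection
in the product Hilbert space. -/
lemma exists_NE [CompleteSpace U] [CompleteSpace Ytil] [∀ i, CompleteSpace (E i)]
    (hα : ∀ i, 0 ≤ α i) {c : ℝ} (hc : 0 < c)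
    (hcoer : ∀ u : U, c * ‖u‖ ^ 2 ≤ ∑ i, α i * ‖K i u‖ ^ 2) :
    ∃ u₀ : U, ∀ v, aForm G K α u₀ v = ellF G yδ v := by
  classical
  let Φ : U →L[ℝ] WithLp 2 (Ytil × PiLp 2 E) :=
    ((WithLp.prodContinuousLinearEquiv 2 ℝ Ytil (PiLp 2 E)).symm :
        Ytil × PiLp 2 E →L[ℝ] WithLp 2 (Ytil × PiLp 2 E)).comp
      (G.prod (((PiLp.continuousLinearEquiv 2 ℝ E).symm : (∀ i, E i) →L[ℝ] PiLp 2 E).comp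
        (ContinuousLinearMap.pi fun i => Real.sqrt (α i) • K i)))
  have hΦfst : ∀ u : U, (WithLp.ofLp (Φ u)).1 = G u := fun u => rfl
  have hΦsnd : ∀ (u : U) (i : Fin r), WithLp.ofLp (WithLp.ofLp (Φ u)).2 i = Real.sqrt (α i) • K i u := fun u i => rfl
  have hinner : ∀ u v : U, ⟪Φ u, Φ v⟫ = aForm G K α u v := by
    intro u v
    rw [WithLp.prod_inner_apply, hΦfst, hΦfst]
    have : ⟪(WithLp.ofLp (Φ u)).2, (WithLp.ofLp (Φ v)).2⟫ = ∑ i, α i * ⟪K i u, K i v⟫ := by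
      rw [PiLp.inner_apply]
      refine Finset.sum_congr rfl fun i _ => ?_
      rw [hΦsnd, hΦsnd, real_inner_smul_left, real_inner_smul_right, ← mul_assoc,
        Real.mul_self_sqrt (hα i)]
    rw [this, aForm]
  have hnorm : ∀ u : U, c * ‖u‖ ^ 2 ≤ ‖Φ u‖ ^ 2 := by
    intro u
    have h1 : ‖Φ u‖ ^ 2 = aForm G K α u u := by
      rw [← real_inner_self_eq_norm_sq, hinner]
    rw [h1, aForm_self_eq]
    have := hcoer u
    nlinarith [sq_nonneg ‖G u‖]
  have hsc : 0 < Real.sqrt c := Real.sqrt_pos.mpr hc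
  have hAL : AntilipschitzWith ⟨(Real.sqrt c)⁻¹, by positivity⟩ Φ := by
    apply Φ.antilipschitz_of_bound
    intro u
    have h1 : Real.sqrt c * ‖u‖ ≤ ‖Φ u‖ := by
      have h2 := hnorm u
      have h3 : (Real.sqrt c * ‖u‖) ^ 2 ≤ ‖Φ u‖ ^ 2 := by
        rw [mul_pow, Real.sq_sqrt hc.le]; exact h2
      nlinarith [norm_nonneg (Φ u), norm_nonneg u, hsc.le,
        mul_nonneg hsc.le (norm_nonneg u)]
    calc ‖u‖ = (Real.sqrt c)⁻¹ * (Real.sqrt c * ‖u‖) := by field_simp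
    _ ≤ (Real.sqrt c)⁻¹ * ‖Φ u‖ := by
        exact mul_le_mul_of_nonneg_left h1 (by positivity)
    _ = (⟨(Real.sqrt c)⁻¹, by positivity⟩ : NNReal) * ‖Φ u‖ := rfl
  set V : Submodule ℝ (WithLp 2 (Ytil × PiLp 2 E)) := LinearMap.range (Φ : U →ₗ[ℝ] WithLp 2 (Ytil × PiLp 2 E)) with hV
  have hclosed : IsClosed (V : Set (WithLp 2 (Ytil × PiLp 2 E))) := by
    rw [hV, LinearMap.coe_range]
    exact hAL.isClosed_range Φ.uniformContinuous
  haveI : CompleteSpace V := hclosed.completeSpace_coe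
  let cH : WithLp 2 (Ytil × PiLp 2 E) := (WithLp.prodContinuousLinearEquiv 2 ℝ Ytil (PiLp 2 E)).symm
    ((m : ℝ)⁻¹ • ∑ j, yδ j, 0)
  have hcfst : (WithLp.ofLp cH).1 = (m : ℝ)⁻¹ • ∑ j, yδ j := rfl
  have hcsnd : (WithLp.ofLp cH).2 = 0 := rfl
  have hcinner : ∀ v : U, ⟪cH, Φ v⟫ = ellF G yδ v := by
    intro v
    rw [WithLp.prod_inner_apply, hcfst, hcsnd, hΦfst, inner_zero_left, add_zero,
      real_inner_smul_left, sum_inner, ellF]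
  obtain ⟨u₀, hu₀⟩ : ∃ u₀ : U, Φ u₀ = ((V.orthogonalProjection cH : V) : WithLp 2 (Ytil × PiLp 2 E)) :=
    (V.orthogonalProjection cH).2
  refine ⟨u₀, fun v => ?_⟩
  have horth : ⟪cH - ((V.orthogonalProjection cH : V) : WithLp 2 (Ytil × PiLp 2 E)), Φ v⟫ = 0 :=
    Submodule.starProjection_inner_eq_zero (K := V) cH (Φ v) ⟨v, rfl⟩
  have : ⟪Φ u₀, Φ v⟫ = ⟪cH, Φ v⟫ := by
    rw [hu₀]
    have := inner_sub_left (𝕜 := ℝ) cH ((V.orthogonalProjection cH : V) : WithLp 2 (Ytil × PiLp 2 E)) (Φ v)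
    rw [horth] at this
    linarith
  rw [← hinner, this, hcinner]

end Aux

variable {Y U Util Ytil Z : Type*}
  [NormedAddCommGroup Y] [NormedSpace ℝ Y] [CompleteSpace Y]
  [NormedAddCommGroup U] [NormedSpace ℝ U] [CompleteSpace U]
  [NormedAddCommGroup Util] [InnerProductSpace ℝ Util] [CompleteSpace Util]
  [NormedAddCommGroup Ytil] [InnerProductSpace ℝ Ytil] [CompleteSpace Ytil]
  [NormedAddCommGroup Z] [NormedSpace ℝ Z] [CompleteSpace Z]

/-- **Proposition 6.1** (existence for the learning problem with linear state
equation): under (L1) and (L2), the learning problem `(LP_lin)` has a solution. -/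
theorem linear_learning_problem_has_solution
    (hYrefl : Function.Surjective (NormedSpace.inclusionInDoubleDual ℝ Y))
    (hUrefl : Function.Surjective (NormedSpace.inclusionInDoubleDual ℝ U))
    {m r : ℕ} (hm : 0 < m) (hr : 0 < r)
    {E : Fin r → Type*} [∀ i, NormedAddCommGroup (E i)]
    [∀ i, InnerProductSpace ℝ (E i)] [∀ i, CompleteSpace (E i)]
    (ιY : Y →L[ℝ] Ytil) (hιY : Function.Injective ιY)
    (ιU : U →L[ℝ] Util) (hιU : Function.Injective ιU)
    (A : Y →L[ℝ] Z) (B : U →L[ℝ] Z) (K : (i : Fin r) → U →L[ℝ] E i)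
    (udag : Util) (yδ : Fin m → Ytil)
    (αlo αhi : Fin r → ℝ) (hαpos : ∀ i, 0 < αlo i) (hαle : ∀ i, αlo i ≤ αhi i)
    (hL1 : Function.Bijective A)
    (hL2 : ∃ ζ > (0 : ℝ), ∀ u : U, ζ * ‖u‖ ^ 2 ≤ ∑ i, ‖K i u‖ ^ 2) :
    ∃ αstar : Fin r → ℝ, (∀ i, αlo i ≤ αstar i ∧ αstar i ≤ αhi i) ∧
      ∃ p : Y × U, SolvesLin A B ιY K αstar yδ p ∧
        ∀ α : Fin r → ℝ, (∀ i, αlo i ≤ α i ∧ α i ≤ αhi i) →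
          ∀ q : Y × U, SolvesLin A B ιY K α yδ q →
            ‖ιU p.2 - udag‖ ^ 2 ≤ ‖ιU q.2 - udag‖ ^ 2 := by
  classical
  obtain ⟨ζ, hζ, hK⟩ := hL2
  haveI : Nonempty (Fin r) := ⟨⟨0, hr⟩⟩
  -- the inverse of A and the solution operator of the state equation
  have hker : LinearMap.ker (A : Y →ₗ[ℝ] Z) = ⊥ := by rw [LinearMap.ker_eq_bot]; exact hL1.1
  have hrange : LinearMap.range (A : Y →ₗ[ℝ] Z) = ⊤ := LinearMap.range_eq_top.mpr hL1.2
  set Aeq : Y ≃L[ℝ] Z := ContinuousLinearEquiv.ofBijective A hker hrange with hAeq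
  set T : U →L[ℝ] Y := (Aeq.symm : Z →L[ℝ] Y).comp B with hT
  have hAeqA : ∀ y : Y, Aeq y = A y := fun y => by
    rw [hAeq, ContinuousLinearEquiv.coeFn_ofBijective]
  have hAT : ∀ u : U, A (T u) = B u := by
    intro u
    rw [hT, ContinuousLinearMap.comp_apply, ← hAeqA, ContinuousLinearEquiv.coe_coe,
      Aeq.apply_symm_apply]
  have hfeas : ∀ q : Y × U, A q.1 = B q.2 ↔ q.1 = T q.2 := by
    intro q
    constructor
    · intro h; exact hL1.1 (by rw [h, hAT])
    · intro h; rw [h, hAT]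
  set G : U →L[ℝ] Ytil := ιY.comp T with hG
  have hJ : ∀ (α : Fin r → ℝ) (q : Y × U), q.1 = T q.2 →
      Jlin ιY K α yδ q = Flin G K α yδ q.2 := by
    intro α q hq
    simp only [Jlin, Flin, hq, hG, ContinuousLinearMap.comp_apply]
  -- the coercivity constant
  set a0 : ℝ := Finset.univ.inf' Finset.univ_nonempty αlo with ha0
  have ha0pos : 0 < a0 := by
    rw [ha0, Finset.lt_inf'_iff]
    exact fun i _ => hαpos i
  have ha0le : ∀ i, a0 ≤ αlo i := fun i => Finset.inf'_le _ (Finset.mem_univ i)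
  set c0 : ℝ := a0 * ζ with hc0def
  have hc0 : 0 < c0 := mul_pos ha0pos hζ
  have hcoer : ∀ α : Fin r → ℝ, (∀ i, αlo i ≤ α i) →
      ∀ u : U, c0 * ‖u‖ ^ 2 ≤ ∑ i, α i * ‖K i u‖ ^ 2 := by
    intro α hα u
    have h1 : a0 * (ζ * ‖u‖ ^ 2) ≤ a0 * ∑ i, ‖K i u‖ ^ 2 :=
      mul_le_mul_of_nonneg_left (hK u) ha0pos.le
    have h2 : a0 * ∑ i, ‖K i u‖ ^ 2 = ∑ i, a0 * ‖K i u‖ ^ 2 := Finset.mul_sum _ _ _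
    have h3 : ∑ i, a0 * ‖K i u‖ ^ 2 ≤ ∑ i, α i * ‖K i u‖ ^ 2 :=
      Finset.sum_le_sum fun i _ =>
        mul_le_mul_of_nonneg_right ((ha0le i).trans (hα i)) (by positivity)
    calc c0 * ‖u‖ ^ 2 = a0 * (ζ * ‖u‖ ^ 2) := by rw [hc0def]; ring
    _ ≤ ∑ i, α i * ‖K i u‖ ^ 2 := by rw [h2] at h1; linarith
  have hα0 : ∀ α : Fin r → ℝ, (∀ i, αlo i ≤ α i) → ∀ i, 0 ≤ α i :=
    fun α hα i => (hαpos i).le.trans (hα i)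
  have hcoerA : ∀ (α : Fin r → ℝ), (∀ i, αlo i ≤ α i) →
      ∀ u : U, c0 * ‖u‖ ^ 2 ≤ aForm G K α u u := by
    intro α hα u
    rw [aForm_self_eq]
    have := hcoer α hα u
    nlinarith [sq_nonneg ‖G u‖]
  -- the solution map of the lower level problem
  have hex : ∀ α : Fin r → ℝ, ∃ u₀ : U,
      (∀ i, αlo i ≤ α i) → ∀ v, aForm G K α u₀ v = ellF G yδ v := by
    intro α
    by_cases h : ∀ i, αlo i ≤ α i
    · obtain ⟨u₀, h₀⟩ := exists_NE G K α yδ (hα0 α h) hc0 (hcoer α h)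
      exact ⟨u₀, fun _ => h₀⟩
    · exact ⟨0, fun h' => absurd h' h⟩
  choose sol hsol using hex
  -- characterisation of the solutions of the lower level problem
  have hchar : ∀ (α : Fin r → ℝ), (∀ i, αlo i ≤ α i) → ∀ q : Y × U,
      SolvesLin A B ιY K α yδ q ↔ (q.1 = T q.2 ∧ q.2 = sol α) := by
    intro α hα q
    have hNE := hsol α hα
    have hmin : ∀ u : U, Flin G K α yδ (sol α) ≤ Flin G K α yδ u := by
      intro u
      rw [Flin_expansion G K α yδ hm hNE u]
      have := aForm_self_nonneg G K α (hα0 α hα) (u - sol α)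
      linarith
    constructor
    · intro hq
      obtain ⟨hfe, hopt⟩ := hq
      have hq1 : q.1 = T q.2 := (hfeas q).mp hfe
      refine ⟨hq1, ?_⟩
      have h1 : Flin G K α yδ q.2 ≤ Flin G K α yδ (sol α) := by
        have h := hopt (T (sol α), sol α) (hAT (sol α))
        rw [hJ α q hq1, hJ α (T (sol α), sol α) rfl] at h
        exact h
      have h3 : Flin G K α yδ q.2 = Flin G K α yδ (sol α)
          + aForm G K α (q.2 - sol α) (q.2 - sol α) / 2 :=
        Flin_expansion G K α yδ hm hNE q.2
      have h5 := hcoerA α hα (q.2 - sol α)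
      have h8 : ‖q.2 - sol α‖ ^ 2 ≤ 0 := by
        have h2 := hmin q.2
        nlinarith [hc0]
      have h9 : ‖q.2 - sol α‖ ^ 2 = 0 := le_antisymm h8 (sq_nonneg _)
      have h6 : ‖q.2 - sol α‖ = 0 := by
        simpa using h9
      exact sub_eq_zero.mp (norm_eq_zero.mp h6)
    · rintro ⟨hq1, hq2⟩
      refine ⟨by rw [hq1, hAT], ?_⟩
      intro p hp
      have hp1 := (hfeas p).mp hp
      rw [hJ α q hq1, hJ α p hp1, hq2]
      exact hmin p.2
  -- a uniform bound on the lower level solutions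
  set Cℓ : ℝ := (m : ℝ)⁻¹ * ((∑ j, ‖yδ j‖) * ‖G‖) with hCℓdef
  have hCℓ0 : 0 ≤ Cℓ := by
    rw [hCℓdef]
    have : 0 ≤ ∑ j, ‖yδ j‖ := Finset.sum_nonneg fun j _ => norm_nonneg _
    positivity
  have hCℓ : ∀ u : U, ellF G yδ u ≤ Cℓ * ‖u‖ := by
    intro u
    have h1 : ∑ j, ⟪yδ j, G u⟫ ≤ ∑ j, ‖yδ j‖ * (‖G‖ * ‖u‖) := by
      refine Finset.sum_le_sum fun j _ => ?_
      exact (real_inner_le_norm _ _).trans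
        (mul_le_mul_of_nonneg_left (G.le_opNorm u) (norm_nonneg _))
    have h2 : ∑ j, ‖yδ j‖ * (‖G‖ * ‖u‖) = (∑ j, ‖yδ j‖) * (‖G‖ * ‖u‖) :=
      (Finset.sum_mul _ _ _).symm
    have h3 : (0:ℝ) ≤ (m : ℝ)⁻¹ := by positivity
    calc ellF G yδ u = (m : ℝ)⁻¹ * ∑ j, ⟪yδ j, G u⟫ := rfl
    _ ≤ (m : ℝ)⁻¹ * ((∑ j, ‖yδ j‖) * (‖G‖ * ‖u‖)) := by
        rw [← h2]; exact mul_le_mul_of_nonneg_left h1 h3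
    _ = Cℓ * ‖u‖ := by rw [hCℓdef]; ring
  set Cb : ℝ := Cℓ / c0 with hCbdef
  have hCb0 : 0 ≤ Cb := div_nonneg hCℓ0 hc0.le
  have hbound : ∀ α : Fin r → ℝ, (∀ i, αlo i ≤ α i) → ‖sol α‖ ≤ Cb := by
    intro α hα
    have h1 := hcoerA α hα (sol α)
    have h2 : aForm G K α (sol α) (sol α) = ellF G yδ (sol α) := hsol α hα (sol α)
    have h3 := hCℓ (sol α)
    rw [hCbdef, le_div_iff₀ hc0]
    nlinarith [norm_nonneg (sol α)]
  -- Lipschitz continuity of the solution map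
  set CK : ℝ := ∑ i, ‖K i‖ ^ 2 with hCKdef
  have hCK0 : 0 ≤ CK := Finset.sum_nonneg fun i _ => sq_nonneg _
  set L : ℝ := CK * Cb / c0 with hLdef
  have hLip : ∀ α β : Fin r → ℝ, (∀ i, αlo i ≤ α i) → (∀ i, αlo i ≤ β i) →
      ‖sol α - sol β‖ ≤ L * dist α β := by
    intro α β hα hβ
    set d : U := sol α - sol β with hd
    have h1 : aForm G K α d d = ∑ i, (β i - α i) * ⟪K i (sol β), K i d⟫ := by
      have e1 : aForm G K α d d = aForm G K α (sol α) d - aForm G K α (sol β) d := by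
        rw [hd, aForm_sub_left]
      have e2 : aForm G K α (sol α) d = aForm G K β (sol β) d := by
        rw [hsol α hα d, hsol β hβ d]
      rw [e1, e2]
      simp only [aForm]
      have e3 : ∀ x s t : ℝ, (x + s) - (x + t) = s - t := by intros; ring
      rw [e3, ← Finset.sum_sub_distrib]
      exact Finset.sum_congr rfl fun i _ => by ring
    have h2 : ∑ i, (β i - α i) * ⟪K i (sol β), K i d⟫ ≤ dist α β * CK * (Cb * ‖d‖) := by
      have hsb := hbound β hβ
      calc ∑ i, (β i - α i) * ⟪K i (sol β), K i d⟫
          ≤ ∑ i, dist α β * (‖K i‖ ^ 2 * (Cb * ‖d‖)) := by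
            refine Finset.sum_le_sum fun i _ => ?_
            have hab : |β i - α i| ≤ dist α β := by
              rw [← Real.dist_eq, dist_comm]
              exact dist_le_pi_dist α β i
            have hi : |⟪K i (sol β), K i d⟫| ≤ ‖K i‖ * Cb * (‖K i‖ * ‖d‖) := by
              refine (abs_real_inner_le_norm _ _).trans ?_
              have hb1 : ‖K i (sol β)‖ ≤ ‖K i‖ * Cb :=
                ((K i).le_opNorm _).trans (mul_le_mul_of_nonneg_left hsb (norm_nonneg _))
              exact mul_le_mul hb1 ((K i).le_opNorm _) (norm_nonneg _) (by positivity)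
            calc (β i - α i) * ⟪K i (sol β), K i d⟫
                ≤ |(β i - α i) * ⟪K i (sol β), K i d⟫| := le_abs_self _
            _ = |β i - α i| * |⟪K i (sol β), K i d⟫| := abs_mul _ _
            _ ≤ dist α β * (‖K i‖ * Cb * (‖K i‖ * ‖d‖)) :=
                mul_le_mul hab hi (abs_nonneg _) dist_nonneg
            _ = dist α β * (‖K i‖ ^ 2 * (Cb * ‖d‖)) := by ring
      _ = dist α β * CK * (Cb * ‖d‖) := by
          rw [← Finset.mul_sum, ← Finset.sum_mul, hCKdef]; ring
    have h3 := hcoerA α hα d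
    have hkey : c0 * ‖d‖ ^ 2 ≤ dist α β * CK * (Cb * ‖d‖) := (h3.trans_eq h1).trans h2
    rw [hLdef, div_mul_eq_mul_div, le_div_iff₀ hc0]
    rcases (norm_nonneg d).eq_or_lt with hd0 | hd0
    · rw [← hd0, zero_mul]
      have : (0:ℝ) ≤ dist α β := dist_nonneg
      positivity
    · have h4 : (c0 * ‖d‖) * ‖d‖ ≤ (CK * Cb * dist α β) * ‖d‖ := by nlinarith
      have h5 := le_of_mul_le_mul_right h4 hd0
      linarith
  -- extract the minimum over the compact box
  set box : Set (Fin r → ℝ) := Set.Icc αlo αhi with hbox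
  have hboxc : IsCompact box := isCompact_Icc
  have hboxne : box.Nonempty := ⟨αlo, Set.mem_Icc.mpr ⟨le_rfl, Pi.le_def.mpr hαle⟩⟩
  have hmemlo : ∀ γ ∈ box, ∀ i, αlo i ≤ γ i := fun γ hγ i =>
    (Pi.le_def.mp (Set.mem_Icc.mp hγ).1) i
  have hsolcont : ContinuousOn sol box := by
    have hL0 : L ≤ (↑(Real.toNNReal L) : ℝ) := Real.le_coe_toNNReal L
    have : LipschitzOnWith (Real.toNNReal L) sol box := by
      apply LipschitzOnWith.of_dist_le_mul
      intro x hx y hy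
      rw [dist_eq_norm]
      exact (hLip x y (hmemlo x hx) (hmemlo y hy)).trans
        (mul_le_mul_of_nonneg_right hL0 dist_nonneg)
    exact this.continuousOn
  have hgc : ContinuousOn (fun γ => ‖ιU (sol γ) - udag‖ ^ 2) box := by
    have hcont : Continuous fun u : U => ‖ιU u - udag‖ ^ 2 :=
      ((ιU.continuous.sub continuous_const).norm.pow 2)
    exact hcont.comp_continuousOn hsolcont
  obtain ⟨αstar, hαsmem, hminOn⟩ := hboxc.exists_isMinOn hboxne hgc
  have hαs : ∀ i, αlo i ≤ αstar i ∧ αstar i ≤ αhi i := fun i =>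
    ⟨(Pi.le_def.mp (Set.mem_Icc.mp hαsmem).1) i, (Pi.le_def.mp (Set.mem_Icc.mp hαsmem).2) i⟩
  refine ⟨αstar, hαs, (T (sol αstar), sol αstar), ?_, ?_⟩
  · exact (hchar αstar (fun i => (hαs i).1) _).mpr ⟨rfl, rfl⟩
  · intro α hα q hq
    have hq2 : q.2 = sol α := ((hchar α (fun i => (hα i).1) q).mp hq).2
    have hmem : α ∈ box := Set.mem_Icc.mpr
      ⟨Pi.le_def.mpr fun i => (hα i).1, Pi.le_def.mpr fun i => (hα i).2⟩
    have h := hminOn hmem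
    simp only at h
    rw [hq2]
    exact h
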